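/- For a set J = {j_1 < j_2 < … < j_ℓ} ⊂ {1,…,n}, the operator D_J = (D_{j_1}+1)(D_{j_2}+2)⋯(D_{j_ℓ}+ℓ), when restricted to functions symmetric in the variables x_{j_1},…,x_{j_ℓ}, is invariant under any permutation of those variables; consequently D_J maps the space of polynomials symmetric in x_{j_1},…,x_{j_ℓ} to itself. -/

import Mathlib

open MvPolynomial

noncomputable section Jack

/-- The field `ℚ(α)` of rational functions in the Jack parameter `α`. -/
abbrev FF : Type := RatFunc ℚ

/-- The Jack parameter `α`, a transcendental element of `ℚ(α)`. -/
abbrev alpha : FF := RatFunc.X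

/-- Polynomials in `x_1, …, x_n` over `ℚ(α)`. -/
abbrev R (n : ℕ) : Type := MvPolynomial (Fin n) FF

variable {n : ℕ}

/-- The exchange operator `K_{ij}` permuting the variables `x_i` and `x_j`. -/
def Kex (i j : Fin n) (p : R n) : R n := rename (Equiv.swap i j) p

lemma kex_dvd (i j : Fin n) (p : R n) : (X i - X j : R n) ∣ (p - Kex i j p) := by
  unfold Kex
  induction p using MvPolynomial.induction_on with
  | C a => simp
  | add p q hp hq =>
      have h := dvd_add hp hq
      rw [map_add]
      convert h using 1
      ring
  | mul_X p k hp =>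
      rw [map_mul, rename_X]
      have key : p * X k - rename (Equiv.swap i j) p * X (Equiv.swap i j k)
          = (p - rename (Equiv.swap i j) p) * X k
            + rename (Equiv.swap i j) p * (X k - X (Equiv.swap i j k)) := by ring
      rw [key]
      refine dvd_add (hp.mul_right _) ?_
      rcases eq_or_ne k i with rfl | hki
      · rw [Equiv.swap_apply_left]
        exact Dvd.intro_left _ rfl
      rcases eq_or_ne k j with rfl | hkj
      · rw [Equiv.swap_apply_right]
        refine dvd_mul_of_dvd_right ?_ _
        exact dvd_sub_comm.mp dvd_rfl
      · rw [Equiv.swap_apply_of_ne_of_ne hki hkj]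
        simp

/-- The divided difference `(p - K_{ij} p)/(x_i - x_j)`, a polynomial. -/
def dd (i j : Fin n) (p : R n) : R n := (kex_dvd i j p).choose

lemma dd_spec (i j : Fin n) (p : R n) :
    p - Kex i j p = (X i - X j) * dd i j p := (kex_dvd i j p).choose_spec

/-- The Dunkl--Cherednik operator
`D_i = α x_i ∂/∂x_i + Σ_{j ≠ i} (x_i/(x_i - x_j))(1 - K_{ij})`. -/
def D (i : Fin n) (p : R n) : R n :=
  C alpha * (X i * pderiv i p) + ∑ j ∈ Finset.univ.erase i, X i * dd i j p

/-- The shifted operator `D_i + m`. -/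
def Dm (i : Fin n) (m : ℤ) (p : R n) : R n := D i p + m • p

/-- `(D_{j_1}+m)(D_{j_2}+m+1)⋯` along a list of indices, applied to `p`. -/
def DJl : List (Fin n) → ℤ → R n → R n
  | [], _, p => p
  | j :: t, m, p => Dm j m (DJl t (m + 1) p)

/-- `D_J = (D_{j_1}+1)(D_{j_2}+2)⋯(D_{j_ℓ}+ℓ)` for `J = {j_1 < … < j_ℓ}`. -/
def DJ (J : Finset (Fin n)) (p : R n) : R n := DJl (J.sort (· ≤ ·)) 1 p

/-- The creation operator `B_i^+ = Σ_{|J| = i} x_J D_J`. -/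
def Bop (i : ℕ) (p : R n) : R n :=
  ∑ J ∈ Finset.univ.powersetCard i, (∏ k ∈ J, X k) * DJ J p

/-- The canonical image of `ℤ[α]` in `ℚ(α)`. -/
def toFF (q : Polynomial ℤ) : FF :=
  algebraMap (Polynomial ℚ) FF (q.map (Int.castRingHom ℚ))

/-- A scalar in `ℚ(α)` is a polynomial in `α` with integer coefficients. -/
def IntAlpha (c : FF) : Prop := ∃ q : Polynomial ℤ, c = toFF q

/-- `p` is symmetric in the variables indexed by `J`. -/
def SymmIn (J : Finset (Fin n)) (p : R n) : Prop :=
  ∀ i ∈ J, ∀ j ∈ J, Kex i j p = p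

/-- The monomial symmetric polynomial `m_μ`, the sum of `x^ν` over the distinct
permutations `ν` of the exponent vector `μ`. -/
def msymmF (μ : Fin n → ℕ) : R n :=
  ∑ ν ∈ Finset.image
      (fun σ : Equiv.Perm (Fin n) => Finsupp.equivFunOnFinite.symm (μ ∘ σ))
      Finset.univ,
    monomial ν 1

/-- The power-sum product `p_λ = p_{λ_1} p_{λ_2} ⋯` over the nonzero parts of `λ`. -/
def pprod (lam : Fin n → ℕ) : R n :=
  ∏ i ∈ Finset.univ.filter (fun i => lam i ≠ 0), psum (Fin n) FF (lam i)

/-- The number of (nonzero) parts `ℓ(λ)`. -/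
def plen (lam : Fin n → ℕ) : ℕ := (Finset.univ.filter fun i => lam i ≠ 0).card

/-- `z_λ = ∏_i i^{m_i(λ)} m_i(λ)!`. -/
def zed (lam : Fin n → ℕ) : ℕ :=
  ∏ i ∈ Finset.Icc 1 (∑ j, lam j),
    i ^ ((Finset.univ.filter fun j => lam j = i).card)
      * Nat.factorial ((Finset.univ.filter fun j => lam j = i).card)

/-- Dominance order: `μ ≤ λ` (same total degree). -/
def Dominates (μ lam : Fin n → ℕ) : Prop :=
  (∑ i, μ i = ∑ i, lam i) ∧
    ∀ k : Fin n, ∑ i ∈ Finset.univ.filter (· ≤ k), μ i ≤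
      ∑ i ∈ Finset.univ.filter (· ≤ k), lam i

/-- Iterated Rodrigues construction: `rodA lam i = (B_i^+)^{λ_i-λ_{i+1}} ⋯ (B_1^+)^{λ_1-λ_2}·1`,
where `lam k` denotes `λ_k` (1-indexed). -/
def rodA (lam : ℕ → ℕ) : ℕ → R n
  | 0 => 1
  | i + 1 => (Bop (i + 1))^[lam (i + 1) - lam (i + 2)] (rodA lam i)

/-- `(B_n^+)^{λ_n}(B_{n-1}^+)^{λ_{n-1}-λ_n} ⋯ (B_1^+)^{λ_1-λ_2}·1`. -/
def rod (lam : ℕ → ℕ) : R n := rodA lam n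

/-- The field of rational functions in `x_1,…,x_n` over `ℚ(α)`. -/
abbrev KF (n : ℕ) : Type := FractionRing (R n)

/-- The embedding of polynomials into rational functions. -/
def toK : R n →+* KF n := algebraMap (R n) (KF n)

/-- The Sutherland operator
`H(α) = α Σ_j (x_j ∂_j)^2 + Σ_{j<k} ((x_j+x_k)/(x_j-x_k))(x_j ∂_j − x_k ∂_k)`,
applied to a polynomial, with values in the field of rational functions. -/
def Hop (p : R n) : KF n :=
  toK (C alpha * ∑ j, X j * pderiv j (X j * pderiv j p))
    + ∑ jk ∈ (Finset.univ : Finset (Fin n × Fin n)).filter (fun jk => jk.1 < jk.2),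
        (toK (X jk.1 + X jk.2) / toK (X jk.1 - X jk.2))
          * toK (X jk.1 * pderiv jk.1 p - X jk.2 * pderiv jk.2 p)

end Jack

noncomputable section AuxLemmas
variable {n : ℕ}

lemma X_sub_ne (i j : Fin n) (h : i ≠ j) : (X i - X j : R n) ≠ 0 := by
  intro hc; exact h (MvPolynomial.X_injective (sub_eq_zero.mp hc))

lemma dd_unique {i j : Fin n} (h : i ≠ j) {p q : R n}
    (hq : p - Kex i j p = (X i - X j) * q) : dd i j p = q :=
  mul_left_cancel₀ (X_sub_ne i j h) (by rw [← dd_spec, hq])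


lemma Kex_C (i j : Fin n) (c : FF) : Kex i j (C c) = C c := by simp [Kex]
lemma Kex_add (i j : Fin n) (p q : R n) : Kex i j (p + q) = Kex i j p + Kex i j q := by simp [Kex]
lemma Kex_mul (i j : Fin n) (p q : R n) : Kex i j (p * q) = Kex i j p * Kex i j q := by simp [Kex]
lemma Kex_X (i j k : Fin n) : Kex i j (X k) = X (Equiv.swap i j k) := by simp [Kex]
lemma Kex_Kex (i j : Fin n) (p : R n) : Kex i j (Kex i j p) = p := by
  simp [Kex, rename_rename, ← Equiv.coe_trans]
lemma Kex_self (i : Fin n) (p : R n) : Kex i i p = p := by simp [Kex, Equiv.swap_self]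

lemma dd_symm_zero {i j : Fin n} (h : i ≠ j) {p : R n} (hp : Kex i j p = p) :
    dd i j p = 0 := dd_unique h (by rw [hp]; ring)

lemma dd_add {i j : Fin n} (h : i ≠ j) (p q : R n) :
    dd i j (p + q) = dd i j p + dd i j q := by
  apply dd_unique h
  have h1 := dd_spec i j p; have h2 := dd_spec i j q
  rw [show Kex i j (p+q) = Kex i j p + Kex i j q by simp [Kex]]
  linear_combination h1 + h2

lemma dd_C_mul {i j : Fin n} (h : i ≠ j) (c : FF) (p : R n) :
    dd i j (C c * p) = C c * dd i j p := by
  apply dd_unique h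
  rw [show Kex i j (C c * p) = C c * Kex i j p by simp [Kex]]
  linear_combination C c * dd_spec i j p

lemma dd_X_mul {i j b : Fin n} (h : i ≠ j) (hbi : b ≠ i) (hbj : b ≠ j) (p : R n) :
    dd i j (X b * p) = X b * dd i j p := by
  apply dd_unique h
  rw [show Kex i j (X b * p) = X (Equiv.swap i j b) * Kex i j p by simp [Kex],
    Equiv.swap_apply_of_ne_of_ne hbi hbj]
  linear_combination (X b : R n) * dd_spec i j p

lemma rename_dd {i j : Fin n} (h : i ≠ j) (σ : Equiv.Perm (Fin n)) (p : R n) :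
    rename σ (dd i j p) = dd (σ i) (σ j) (rename σ p) := by
  refine (dd_unique (fun hc => h (σ.injective hc)) ?_).symm
  have key : Kex (σ i) (σ j) (rename σ p) = rename σ (Kex i j p) := by
    unfold Kex
    rw [rename_rename, rename_rename]
    have hfun : (⇑(Equiv.swap (σ i) (σ j)) ∘ ⇑σ) = (⇑σ ∘ ⇑(Equiv.swap i j)) := by
      funext x
      simp only [Function.comp_apply]
      have := Equiv.swap_apply_apply σ i j
      calc Equiv.swap (σ i) (σ j) (σ x) = (σ * Equiv.swap i j * σ⁻¹) (σ x) := by rw [← this]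
        _ = σ (Equiv.swap i j x) := by simp [Equiv.Perm.mul_apply]
    rw [hfun]
  rw [key, ← map_sub, dd_spec i j p, map_mul, map_sub, rename_X, rename_X]

lemma Kex_dd {i j : Fin n} (h : i ≠ j) (a b : Fin n) (p : R n) :
    Kex a b (dd i j p) = dd (Equiv.swap a b i) (Equiv.swap a b j) (Kex a b p) :=
  rename_dd h (Equiv.swap a b) p

lemma Kex_pderiv (a b k : Fin n) (p : R n) :
    Kex a b (pderiv k p) = pderiv (Equiv.swap a b k) (Kex a b p) := by
  unfold Kex
  rw [← pderiv_rename (Equiv.swap a b).injective k p]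

lemma pderiv_dd {i j a : Fin n} (h : i ≠ j) (hai : a ≠ i) (haj : a ≠ j) (p : R n) :
    pderiv a (dd i j p) = dd i j (pderiv a p) := by
  refine (dd_unique h ?_).symm
  have hK : Kex i j (pderiv a p) = pderiv a (Kex i j p) := by
    rw [Kex_pderiv i j a p, Equiv.swap_apply_of_ne_of_ne hai haj]
  rw [hK, ← Derivation.map_sub (pderiv a) p (Kex i j p), dd_spec i j p, pderiv_mul]
  rw [map_sub, pderiv_X_of_ne (Ne.symm hai), pderiv_X_of_ne (Ne.symm haj)]
  ring

lemma dd_mul_inv {i j : Fin n} (h : i ≠ j) {c : R n} (hc : Kex i j c = c) (p : R n) :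
    dd i j (c * p) = c * dd i j p := by
  apply dd_unique h
  rw [Kex_mul, hc]
  linear_combination c * dd_spec i j p

lemma dd_sub {i j : Fin n} (h : i ≠ j) (p q : R n) :
    dd i j (p - q) = dd i j p - dd i j q := by
  apply dd_unique h
  rw [show Kex i j (p - q) = Kex i j p - Kex i j q by unfold Kex; rw [map_sub]]
  linear_combination dd_spec i j p - dd_spec i j q

lemma Kex_X_of_ne {i j b : Fin n} (hbi : b ≠ i) (hbj : b ≠ j) :
    Kex i j (X b : R n) = X b := by
  rw [Kex_X, Equiv.swap_apply_of_ne_of_ne hbi hbj]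

lemma dd_comm_disjoint {a k b l : Fin n} (hak : a ≠ k) (hbl : b ≠ l)
    (hab : a ≠ b) (hal : a ≠ l) (hkb : k ≠ b) (hkl : k ≠ l) (p : R n) :
    dd a k (dd b l p) = dd b l (dd a k p) := by
  apply dd_unique hak
  have h1 : Kex a k (dd b l p) = dd b l (Kex a k p) := by
    rw [Kex_dd hbl a k p, Equiv.swap_apply_of_ne_of_ne (Ne.symm hab) (Ne.symm hkb),
      Equiv.swap_apply_of_ne_of_ne (Ne.symm hal) (Ne.symm hkl)]
  rw [h1, ← dd_sub hbl, dd_spec a k p,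
    dd_mul_inv hbl (by rw [show Kex b l (X a - X k : R n) = Kex b l (X a) - Kex b l (X k) by unfold Kex; rw [map_sub], Kex_X_of_ne hab hal, Kex_X_of_ne hkb hkl])]

lemma Kex_comm (i j : Fin n) (p : R n) : Kex j i p = Kex i j p := by
  unfold Kex; rw [Equiv.swap_comm]

lemma braid_sym {a b k : Fin n} (hab : a ≠ b) (hak : a ≠ k) (hbk : b ≠ k)
    {q : R n} (hq : Kex a b q = q) :
    dd a k (dd b k q) = dd b k (dd a k q) := by
  set q1 := Kex a k q with hq1
  set q2 := Kex b k q with hq2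
  set d1 := dd a k q with hd1
  set d2 := dd b k q with hd2
  -- swap-composition facts
  have hKswap : ∀ (i j : Fin n) (r : R n), i ≠ j → Kex a b (Kex i j r)
      = Kex (Equiv.swap a b i) (Equiv.swap a b j) (Kex a b r) := by
    intro i j r _
    unfold Kex
    rw [rename_rename, rename_rename]
    have hfun : (⇑(Equiv.swap (Equiv.swap a b i) (Equiv.swap a b j)) ∘ ⇑(Equiv.swap a b))
        = (⇑(Equiv.swap a b) ∘ ⇑(Equiv.swap i j)) := by
      funext x
      simp only [Function.comp_apply]
      have h2 := Equiv.swap_apply_apply (Equiv.swap a b) i j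
      calc Equiv.swap (Equiv.swap a b i) (Equiv.swap a b j) (Equiv.swap a b x)
          = ((Equiv.swap a b) * Equiv.swap i j * (Equiv.swap a b)⁻¹) (Equiv.swap a b x) := by
            rw [← h2]
        _ = (Equiv.swap a b) (Equiv.swap i j x) := by simp [Equiv.Perm.mul_apply]
    rw [hfun]
  have f2 : Kex a b q1 = q2 := by
    rw [hq1, hKswap a k q hak, Equiv.swap_apply_left,
      Equiv.swap_apply_of_ne_of_ne (Ne.symm hak) (Ne.symm hbk), hq]
  have f3 : Kex a b q2 = q1 := by
    rw [hq2, hKswap b k q hbk, Equiv.swap_apply_right,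
      Equiv.swap_apply_of_ne_of_ne (Ne.symm hak) (Ne.symm hbk), hq]
  have f1 : Kex a k d2 = dd b a q1 := by
    rw [hd2, Kex_dd hbk a k q, Equiv.swap_apply_of_ne_of_ne (Ne.symm hab) hbk,
      Equiv.swap_apply_right, ← hq1]
  have f4 : Kex b k d1 = dd a b q2 := by
    rw [hd1, Kex_dd hak b k q, Equiv.swap_apply_of_ne_of_ne hab hak,
      Equiv.swap_apply_right, ← hq2]
  have s1 : q - q2 = (X b - X k) * d2 := dd_spec b k q
  have s2 : d2 - dd b a q1 = (X a - X k) * dd a k d2 := by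
    rw [← f1]; exact dd_spec a k d2
  have s3 : q1 - q2 = (X b - X a) * dd b a q1 := by
    have := dd_spec b a q1
    rwa [Kex_comm a b q1, f2] at this
  have s4 : q - q1 = (X a - X k) * d1 := dd_spec a k q
  have s5 : d1 - dd a b q2 = (X b - X k) * dd b k d1 := by
    rw [← f4]; exact dd_spec b k d1
  have s6 : q2 - q1 = (X a - X b) * dd a b q2 := by
    have := dd_spec a b q2
    rwa [f3] at this
  have hc : ((X a - X k) * ((X b - X k) * (X b - X a)) : R n) ≠ 0 :=
    mul_ne_zero (X_sub_ne a k hak) (mul_ne_zero (X_sub_ne b k hbk) (X_sub_ne b a (Ne.symm hab)))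
  apply mul_left_cancel₀ hc
  linear_combination (-(X b - X a : R n)) * s1 + (-((X b - X k) * (X b - X a) : R n)) * s2
    + ((X b - X k : R n)) * s3 + ((X b - X a : R n)) * s4
    + (((X a - X k) * (X b - X a) : R n)) * s5 + ((X a - X k : R n)) * s6

lemma Kex_sum {i j : Fin n} {α : Type*} (s : Finset α) (f : α → R n) :
    Kex i j (∑ x ∈ s, f x) = ∑ x ∈ s, Kex i j (f x) := by
  unfold Kex; exact map_sum _ _ _

lemma dd_zero {i j : Fin n} (h : i ≠ j) : dd i j (0 : R n) = 0 :=
  dd_symm_zero h (by unfold Kex; simp)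

lemma dd_sum {i j : Fin n} (h : i ≠ j) {α : Type*} (s : Finset α) (f : α → R n) :
    dd i j (∑ x ∈ s, f x) = ∑ x ∈ s, dd i j (f x) := by
  classical
  induction s using Finset.induction_on with
  | empty => simpa using dd_zero h
  | insert x s' hx ih =>
                    rw [Finset.sum_insert hx, Finset.sum_insert hx, dd_add h, ih]

lemma pderiv_comm (a b : Fin n) (p : R n) :
    pderiv a (pderiv b p) = pderiv b (pderiv a p) := by
  induction p using MvPolynomial.induction_on with
  | C c => simp
  | add p q hp hq => simp [map_add, hp, hq]
  | mul_X p k hp =>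
      simp only [pderiv_mul, map_add, pderiv_mul, hp]
      rcases eq_or_ne k a with rfl | hka
      · rcases eq_or_ne k b with rfl | hkb
        · simp
        · simp [pderiv_X_self, pderiv_X_of_ne (Ne.symm hkb), Pi.single_eq_of_ne hkb]
      · rcases eq_or_ne k b with rfl | hkb
        · simp [pderiv_X_self, pderiv_X_of_ne (Ne.symm hka), Pi.single_eq_of_ne hka]
        · simp [pderiv_X_of_ne (Ne.symm hka), pderiv_X_of_ne (Ne.symm hkb),
            Pi.single_eq_of_ne hka, Pi.single_eq_of_ne hkb]

lemma D_split {i j : Fin n} (hji : j ≠ i) (p : R n) :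
    D i p = (C alpha * (X i * pderiv i p)
      + ∑ k ∈ (Finset.univ.erase i).erase j, X i * dd i k p) + X i * dd i j p := by
  unfold D
  rw [← Finset.sum_erase_add (Finset.univ.erase i) _
    (Finset.mem_erase.mpr ⟨hji, Finset.mem_univ j⟩)]
  ring

lemma u_expand {a b : Fin n} (hab : a ≠ b) {q : R n} (hq : Kex a b q = q) :
    D b q = C alpha * (X b * pderiv b q)
      + ∑ l ∈ (Finset.univ.erase a).erase b, X b * dd b l q := by
  rw [D_split (i:=b) (j:=a) hab q, dd_symm_zero (Ne.symm hab) (by rw [Kex_comm a b q, hq]),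
    Finset.erase_right_comm]
  ring

lemma A_eq {a b : Fin n} (hab : a ≠ b) {q : R n} (hq : Kex a b q = q) :
    C alpha * (X a * pderiv a (D b q))
      + ∑ k ∈ (Finset.univ.erase a).erase b, X a * dd a k (D b q)
    = C alpha * C alpha * (X a * X b * pderiv a (pderiv b q))
      + ((∑ l ∈ (Finset.univ.erase a).erase b, C alpha * (X a * X b * dd b l (pderiv a q)))
       + (∑ k ∈ (Finset.univ.erase a).erase b, C alpha * (X a * X b * dd a k (pderiv b q))))
      + ∑ k ∈ (Finset.univ.erase a).erase b, ∑ l ∈ (Finset.univ.erase a).erase b,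
          X a * X b * dd a k (dd b l q) := by
  have hS : ∀ x ∈ (Finset.univ.erase a).erase b, x ≠ a ∧ x ≠ b := by
    intro x hx
    have h1 := Finset.mem_erase.mp hx
    have h2 := Finset.mem_erase.mp h1.2
    exact ⟨h2.1, h1.1⟩
  have h1 : pderiv a (D b q)
      = C alpha * (X b * pderiv b (pderiv a q))
        + ∑ l ∈ (Finset.univ.erase a).erase b, X b * dd b l (pderiv a q) := by
    rw [u_expand hab hq, map_add, pderiv_C_mul, map_sum, pderiv_mul,
      pderiv_X_of_ne (Ne.symm hab), pderiv_comm]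
    rw [zero_mul, zero_add]
    congr 1
    refine Finset.sum_congr rfl fun l hl => ?_
    obtain ⟨hla, hlb⟩ := hS l hl
    rw [pderiv_mul, pderiv_X_of_ne (Ne.symm hab), zero_mul, zero_add,
      pderiv_dd (Ne.symm hlb) hab (Ne.symm hla)]
  have h2 : ∀ k ∈ (Finset.univ.erase a).erase b, dd a k (D b q)
      = C alpha * (X b * dd a k (pderiv b q))
        + ∑ l ∈ (Finset.univ.erase a).erase b, X b * dd a k (dd b l q) := by
    intro k hk
    obtain ⟨hka, hkb⟩ := hS k hk
    rw [u_expand hab hq, dd_add (Ne.symm hka), dd_C_mul (Ne.symm hka),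
      dd_X_mul (Ne.symm hka) (Ne.symm hab) (Ne.symm hkb), dd_sum (Ne.symm hka)]
    congr 1
    refine Finset.sum_congr rfl fun l hl => ?_
    rw [dd_X_mul (Ne.symm hka) (Ne.symm hab) (Ne.symm hkb)]
  have h3 : ∑ k ∈ (Finset.univ.erase a).erase b, X a * dd a k (D b q)
      = ∑ k ∈ (Finset.univ.erase a).erase b,
          (C alpha * (X a * (X b * dd a k (pderiv b q)))
            + ∑ l ∈ (Finset.univ.erase a).erase b, X a * (X b * dd a k (dd b l q))) := by
    refine Finset.sum_congr rfl fun k hk => ?_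
    rw [h2 k hk, mul_add, Finset.mul_sum]
    ring_nf
  rw [h1, h3]
  simp only [mul_add, Finset.mul_sum, Finset.sum_add_distrib]
  ring_nf
  rw [pderiv_comm b a q]

lemma E_inv {a b : Fin n} (hab : a ≠ b) {q : R n} (hq : Kex a b q = q) :
    Kex a b (C alpha * C alpha * (X a * X b * pderiv a (pderiv b q))
      + ((∑ l ∈ (Finset.univ.erase a).erase b, C alpha * (X a * X b * dd b l (pderiv a q)))
       + (∑ k ∈ (Finset.univ.erase a).erase b, C alpha * (X a * X b * dd a k (pderiv b q))))
      + ∑ k ∈ (Finset.univ.erase a).erase b, ∑ l ∈ (Finset.univ.erase a).erase b,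
          X a * X b * dd a k (dd b l q))
    = C alpha * C alpha * (X a * X b * pderiv a (pderiv b q))
      + ((∑ l ∈ (Finset.univ.erase a).erase b, C alpha * (X a * X b * dd b l (pderiv a q)))
       + (∑ k ∈ (Finset.univ.erase a).erase b, C alpha * (X a * X b * dd a k (pderiv b q))))
      + ∑ k ∈ (Finset.univ.erase a).erase b, ∑ l ∈ (Finset.univ.erase a).erase b,
          X a * X b * dd a k (dd b l q) := by
  have hS : ∀ x ∈ (Finset.univ.erase a).erase b, x ≠ a ∧ x ≠ b := by
    intro x hx
    have h1 := Finset.mem_erase.mp hx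
    have h2 := Finset.mem_erase.mp h1.2
    exact ⟨h2.1, h1.1⟩
  have hpa : Kex a b (pderiv a q) = pderiv b q := by
    rw [Kex_pderiv a b a q, Equiv.swap_apply_left, hq]
  have hpb : Kex a b (pderiv b q) = pderiv a q := by
    rw [Kex_pderiv a b b q, Equiv.swap_apply_right, hq]
  have hXa : Kex a b (X a : R n) = X b := by rw [Kex_X, Equiv.swap_apply_left]
  have hXb : Kex a b (X b : R n) = X a := by rw [Kex_X, Equiv.swap_apply_right]
  rw [Kex_add, Kex_add, Kex_add]
  congr 1
  · congr 1
    -- T1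
    · simp only [Kex_mul, Kex_C, hXa, hXb]
      rw [Kex_pderiv a b a, Equiv.swap_apply_left, hpb, pderiv_comm b a q]
      ring
    -- T2 + T3 swap
    · rw [Kex_sum, Kex_sum, add_comm]
      congr 1
      · refine Finset.sum_congr rfl fun l hl => ?_
        obtain ⟨hla, hlb⟩ := hS l hl
        simp only [Kex_mul, Kex_C, hXa, hXb]
        rw [Kex_dd (Ne.symm hla) a b, Equiv.swap_apply_left,
          Equiv.swap_apply_of_ne_of_ne hla hlb, hpb]
        ring
      · refine Finset.sum_congr rfl fun k hk => ?_
        obtain ⟨hka, hkb⟩ := hS k hk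
        simp only [Kex_mul, Kex_C, hXa, hXb]
        rw [Kex_dd (Ne.symm hkb) a b, Equiv.swap_apply_right,
          Equiv.swap_apply_of_ne_of_ne hka hkb, hpa]
        ring
  -- T4
  · rw [Kex_sum]
    have step : ∀ k ∈ (Finset.univ.erase a).erase b,
        Kex a b (∑ l ∈ (Finset.univ.erase a).erase b, X a * X b * dd a k (dd b l q))
        = ∑ l ∈ (Finset.univ.erase a).erase b, X a * X b * dd b k (dd a l q) := by
      intro k hk
      obtain ⟨hka, hkb⟩ := hS k hk
      rw [Kex_sum]
      refine Finset.sum_congr rfl fun l hl => ?_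
      obtain ⟨hla, hlb⟩ := hS l hl
      simp only [Kex_mul, hXa, hXb]
      rw [Kex_dd (Ne.symm hka) a b, Equiv.swap_apply_left,
        Equiv.swap_apply_of_ne_of_ne hka hkb,
        Kex_dd (Ne.symm hlb) a b, Equiv.swap_apply_right,
        Equiv.swap_apply_of_ne_of_ne hla hlb, hq]
      ring
    rw [Finset.sum_congr rfl step, Finset.sum_comm]
    refine Finset.sum_congr rfl fun k hk => Finset.sum_congr rfl fun l hl => ?_
    obtain ⟨hka, hkb⟩ := hS k hk
    obtain ⟨hla, hlb⟩ := hS l hl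
    congr 1
    rcases eq_or_ne k l with rfl | hkl
    · exact (braid_sym hab (Ne.symm hka) (Ne.symm hkb) hq).symm
    · exact (dd_comm_disjoint (Ne.symm hka) (Ne.symm hlb) hab (Ne.symm hla)
        hkb hkl q).symm

lemma Kex_D (a b i : Fin n) (p : R n) :
    Kex a b (D i p) = D (Equiv.swap a b i) (Kex a b p) := by
  unfold D
  rw [Kex_add, Kex_mul, Kex_C, Kex_mul, Kex_X, Kex_pderiv, Kex_sum]
  congr 1
  calc ∑ j ∈ Finset.univ.erase i, Kex a b (X i * dd i j p)
      = ∑ j ∈ Finset.univ.erase i,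
          X (Equiv.swap a b i) * dd (Equiv.swap a b i) (Equiv.swap a b j) (Kex a b p) := by
        refine Finset.sum_congr rfl fun j hj => ?_
        rw [Kex_mul, Kex_X, Kex_dd (Ne.symm (Finset.mem_erase.mp hj).1) a b]
    _ = ∑ j ∈ Finset.univ.erase (Equiv.swap a b i),
          X (Equiv.swap a b i) * dd (Equiv.swap a b i) j (Kex a b p) := by
        refine Finset.sum_equiv (Equiv.swap a b) (fun j => ?_) (fun j hj => rfl)
        simp only [Finset.mem_erase, Finset.mem_univ, and_true]
        exact (Equiv.swap a b).injective.ne_iff.symm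

lemma D_add (i : Fin n) (p q : R n) : D i (p + q) = D i p + D i q := by
  unfold D
  rw [map_add]
  have hs : ∀ j ∈ Finset.univ.erase i, X i * dd i j (p + q)
      = X i * dd i j p + X i * dd i j q := fun j hj => by
    rw [dd_add (Ne.symm (Finset.mem_erase.mp hj).1), mul_add]
  rw [Finset.sum_congr rfl hs, Finset.sum_add_distrib]
  ring

lemma D_C_mul (i : Fin n) (c : FF) (p : R n) : D i (C c * p) = C c * D i p := by
  unfold D
  rw [pderiv_C_mul]
  have hs : ∀ j ∈ Finset.univ.erase i, X i * dd i j (C c * p)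
      = C c * (X i * dd i j p) := fun j hj => by
    rw [dd_C_mul (Ne.symm (Finset.mem_erase.mp hj).1)]
    ring
  rw [Finset.sum_congr rfl hs, ← Finset.mul_sum]
  ring

lemma D_zsmul (i : Fin n) (m : ℤ) (p : R n) : D i (m • p) = m • D i p := by
  rw [zsmul_eq_mul, zsmul_eq_mul, show ((m : ℤ) : R n) = C ((m : ℤ) : FF) by
    rw [map_intCast], D_C_mul]

lemma D_comm {a b : Fin n} (hab : a ≠ b) {q : R n} (hq : Kex a b q = q) :
    D a (D b q) + D a q = D b (D a q) + D b q := by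
  have hu : Kex a b (D b q) = D a q := by
    rw [Kex_D a b b, Equiv.swap_apply_right, hq]
  have hv : Kex a b (D a q) = D b q := by
    rw [Kex_D a b a, Equiv.swap_apply_left, hq]
  have hs : D b q - D a q = (X a - X b) * dd a b (D b q) := by
    have := dd_spec a b (D b q)
    rwa [hu] at this
  have hw : dd b a (D a q) = dd a b (D b q) := by
    apply dd_unique (Ne.symm hab)
    rw [Kex_comm a b (D a q), hv]
    linear_combination -hs
  have e1 : D a (D b q) = (C alpha * (X a * pderiv a (D b q))
      + ∑ k ∈ (Finset.univ.erase a).erase b, X a * dd a k (D b q))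
      + X a * dd a b (D b q) := D_split (Ne.symm hab) (D b q)
  have e2 : D b (D a q) = (C alpha * (X b * pderiv b (D a q))
      + ∑ k ∈ (Finset.univ.erase a).erase b, X b * dd b k (D a q))
      + X b * dd b a (D a q) := by
    rw [D_split (i := b) (j := a) hab (D a q), Finset.erase_right_comm]
  have hKA : Kex a b (C alpha * (X a * pderiv a (D b q))
      + ∑ k ∈ (Finset.univ.erase a).erase b, X a * dd a k (D b q))
      = C alpha * (X b * pderiv b (D a q))
        + ∑ k ∈ (Finset.univ.erase a).erase b, X b * dd b k (D a q) := by
    rw [Kex_add, Kex_mul, Kex_C, Kex_mul, Kex_X, Equiv.swap_apply_left,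
      Kex_pderiv a b a, Equiv.swap_apply_left, hu, Kex_sum]
    congr 1
    refine Finset.sum_congr rfl fun k hk => ?_
    have h1 := Finset.mem_erase.mp hk
    have h2 := Finset.mem_erase.mp h1.2
    rw [Kex_mul, Kex_X, Equiv.swap_apply_left, Kex_dd (Ne.symm h2.1) a b,
      Equiv.swap_apply_left, Equiv.swap_apply_of_ne_of_ne h2.1 h1.1, hu]
  have hAA : Kex a b (C alpha * (X a * pderiv a (D b q))
      + ∑ k ∈ (Finset.univ.erase a).erase b, X a * dd a k (D b q))
      = C alpha * (X a * pderiv a (D b q))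
        + ∑ k ∈ (Finset.univ.erase a).erase b, X a * dd a k (D b q) := by
    rw [A_eq hab hq]
    exact E_inv hab hq
  have e3 := hKA.symm.trans hAA
  linear_combination e1 - e2 - e3 - (X b : R n) * hw - hs

lemma Kex_zsmul (a b : Fin n) (m : ℤ) (p : R n) : Kex a b (m • p) = m • Kex a b p := by
  unfold Kex; exact map_zsmul _ _ _

lemma Dm_swap {a b : Fin n} (hab : a ≠ b) {q : R n} (hq : Kex a b q = q) (m : ℤ) :
    Dm a m (Dm b (m+1) q) = Dm b m (Dm a (m+1) q) := by
  unfold Dm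
  rw [D_add, D_add, D_zsmul, D_zsmul]
  have key := D_comm hab hq
  simp only [zsmul_eq_mul]
  push_cast
  linear_combination key

lemma Kex_DJl_map (a b : Fin n) (l : List (Fin n)) (m : ℤ) (p : R n) :
    Kex a b (DJl l m p) = DJl (l.map (Equiv.swap a b)) m (Kex a b p) := by
  induction l generalizing m with
  | nil => rfl
  | cons j t ih =>
      show Kex a b (Dm j m (DJl t (m+1) p))
        = Dm (Equiv.swap a b j) m (DJl (t.map (Equiv.swap a b)) (m+1) (Kex a b p))
      unfold Dm
      rw [Kex_add, Kex_D, Kex_zsmul, ih]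

lemma Kex_DJl_fixed {a b : Fin n} {l : List (Fin n)}
    (hla : ∀ x ∈ l, x ≠ a ∧ x ≠ b) (m : ℤ) (p : R n) :
    Kex a b (DJl l m p) = DJl l m (Kex a b p) := by
  rw [Kex_DJl_map]
  congr 1
  conv_rhs => rw [← List.map_id l]
  refine List.map_congr_left fun x hx => ?_
  exact Equiv.swap_apply_of_ne_of_ne (hla x hx).1 (hla x hx).2

lemma DJl_perm {J : Finset (Fin n)} {p : R n} (hsym : SymmIn J p)
    {l₁ l₂ : List (Fin n)} (hperm : l₁.Perm l₂) :
    (∀ x ∈ l₁, x ∈ J) → l₁.Nodup → ∀ m, DJl l₁ m p = DJl l₂ m p := by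
  induction hperm with
  | nil => intro _ _ m; rfl
  | cons x h ih =>
      intro hmem hnd m
      simp only [DJl]
      rw [ih (fun y hy => hmem y (List.mem_cons_of_mem x hy)) (List.nodup_cons.mp hnd).2 (m+1)]
  | swap x y t =>
      intro hmem hnd m
      simp only [DJl]
      have hyx : y ≠ x := by
        have := List.nodup_cons.mp hnd
        exact fun hc => this.1 (hc ▸ List.mem_cons_self (a := x) (l := t))
      have hq : Kex y x (DJl t (m+1+1) p) = DJl t (m+1+1) p := by
        have ht : ∀ z ∈ t, z ≠ y ∧ z ≠ x := by
          intro z hz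
          have h1 := List.nodup_cons.mp hnd
          have h2 := List.nodup_cons.mp h1.2
          constructor
          · exact fun hc => h1.1 (hc ▸ List.mem_cons_of_mem x hz)
          · exact fun hc => h2.1 (hc ▸ hz)
        rw [Kex_DJl_fixed ht,
          hsym y (hmem y (List.mem_cons_self (a := y) (l := x :: t))) x
            (hmem x (List.mem_cons_of_mem y (List.mem_cons_self (a := x) (l := t))))]
      exact Dm_swap hyx hq m
  | trans h1 h2 ih1 ih2 =>
      intro hmem hnd m
      rw [ih1 hmem hnd m,
        ih2 (fun x hx => hmem x (h1.mem_iff.mpr hx)) (h1.nodup hnd) m]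

theorem DJ_perm_invariant' (n : ℕ) (J : Finset (Fin n)) (p : R n) (hsym : SymmIn J p) :
    (∀ l : List (Fin n), l.Perm (J.sort (· ≤ ·)) → DJl l 1 p = DJ J p) ∧
    SymmIn J (DJ J p) := by
  have part1 : ∀ l : List (Fin n), l.Perm (J.sort (· ≤ ·)) → DJl l 1 p = DJ J p := by
    intro l hl
    exact DJl_perm hsym hl
      (fun x hx => (Finset.mem_sort _).mp (hl.mem_iff.mp hx))
      (hl.nodup_iff.mpr (Finset.sort_nodup J _)) 1
  refine ⟨part1, ?_⟩
  intro i hi j hj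
  rcases eq_or_ne i j with rfl | hij
  · exact Kex_self i _
  · have hswapJ : ∀ x, x ∈ J → Equiv.swap i j x ∈ J := by
      intro x hx
      rcases eq_or_ne x i with rfl | hxi
      · rwa [Equiv.swap_apply_left]
      rcases eq_or_ne x j with rfl | hxj
      · rwa [Equiv.swap_apply_right]
      · rwa [Equiv.swap_apply_of_ne_of_ne hxi hxj]
    have hiffJ : ∀ x, Equiv.swap i j x ∈ J ↔ x ∈ J := by
      intro x
      constructor
      · intro hx
        have := hswapJ _ hx
        rwa [Equiv.swap_apply_self] at this
      · exact hswapJ x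
    have hnd : ((J.sort (· ≤ ·)).map (Equiv.swap i j)).Nodup :=
      (Finset.sort_nodup J _).map (Equiv.injective _)
    have hmemiff : ∀ x, x ∈ (J.sort (· ≤ ·)).map (Equiv.swap i j) ↔ x ∈ J.sort (· ≤ ·) := by
      intro x
      rw [List.mem_map, Finset.mem_sort]
      constructor
      · rintro ⟨a, ha, rfl⟩
        exact hswapJ a ((Finset.mem_sort _).mp ha)
      · intro hx
        refine ⟨Equiv.swap i j x, ?_, Equiv.swap_apply_self _ _ _⟩
        rw [Finset.mem_sort]
        exact hswapJ x hx
    have hperm : ((J.sort (· ≤ ·)).map (Equiv.swap i j)).Perm (J.sort (· ≤ ·)) :=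
      (List.perm_ext_iff_of_nodup hnd (Finset.sort_nodup J _)).mpr hmemiff
    have h1 : Kex i j (DJ J p) = DJl ((J.sort (· ≤ ·)).map (Equiv.swap i j)) 1 p := by
      show Kex i j (DJl (J.sort (· ≤ ·)) 1 p) = _
      rw [Kex_DJl_map, hsym i hi j hj]
    rw [h1]
    exact part1 _ hperm

end AuxLemmas

/-- `D_J` restricted to functions symmetric in the variables indexed by `J`
is invariant under permutations of those variables, and preserves such symmetry. -/
theorem DJ_perm_invariant (n : ℕ) (J : Finset (Fin n)) (p : R n) (hsym : SymmIn J p) :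
    (∀ l : List (Fin n), l.Perm (J.sort (· ≤ ·)) → DJl l 1 p = DJ J p) ∧
    SymmIn J (DJ J p) :=
  DJ_perm_invariant' n J p hsym
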